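/- Let A_n, B_n be finite groups (n ∈ ℕ) and M_n = A_n ⋉ B_n a semidirect product with B_n normal. For each n let b_{n,1}, …, b_{n,k} ∈ B_n be such that M_n is generated by A_n together with the sets of commutators [A_n, b_{n,s}] = {[a, b_{n,s}] : a ∈ A_n} for s = 1, …, k. Suppose X = ⟨x_1, …, x_m⟩ is a frame subgroup of ∏_{n=1}^∞ A_n; regard X as a subgroup of 𝔐 := ∏_{n=1}^∞ M_n, and set b_s := (b_{n,s})_n ∈ 𝔐 for s = 1, …, k. Then the subgroup Z = ⟨X, [x_j, b_s] : 1 ≤ j ≤ m, 1 ≤ s ≤ k⟩ of 𝔐 is a frame for 𝔐. -/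

import Mathlib

/-- A subgroup `G` of a Cartesian product `∏ i, S i` of finite groups is a *frame* if it is
finitely generated, contains the restricted direct sum (all elements with finite support),
and every finite-index subgroup of `G` contains a principal congruence subgroup
`G ∩ ker(∏ i, S i → ∏ i ∈ V, S i)` for some finite set `V` of indices. -/
def IsFrame {ι : Type*} {S : ι → Type*} [∀ i, Group (S i)]
    (G : Subgroup (∀ i, S i)) : Prop :=
  G.FG ∧
  (∀ x : ∀ i, S i, {i | x i ≠ 1}.Finite → x ∈ G) ∧
  (∀ H : Subgroup G, H.FiniteIndex →
    ∃ V : Finset ι, ∀ g : G, (∀ i ∈ V, (g : ∀ i, S i) i = 1) → g ∈ H)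

set_option maxHeartbeats 1000000 in
/-- **Lemma (Kassabov–Nikolov).**  Let `M n = A n ⋉ B n` be semidirect products of finite
groups (with `B n` normal), and let `b n 1, …, b n k ∈ B n` be such that `M n` is generated
by `A n` together with the commutator sets `[A n, b n s] = {a⁻¹ * (b n s)⁻¹ * a * (b n s)}`.
If `X = ⟨x 1, …, x m⟩` is a frame subgroup of `∏ n, A n`, regarded inside
`𝔐 = ∏ n, M n` via the coordinatewise inclusion `ι`, and `bb s = (b n s)_n ∈ 𝔐`, then
`Z = ⟨X, [x j, bb s] (1 ≤ j ≤ m, 1 ≤ s ≤ k)⟩` is a frame for `𝔐`. -/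
theorem frame_extension_semidirect
    (A B : ℕ → Type) [∀ n, Group (A n)] [∀ n, Group (B n)]
    [∀ n, Finite (A n)] [∀ n, Finite (B n)]
    (φ : ∀ n, A n →* MulAut (B n)) (k m : ℕ) (b : ∀ n, Fin k → B n)
    (hgen : ∀ n, Subgroup.closure
      ((Set.range ⇑(SemidirectProduct.inr : A n →* B n ⋊[φ n] A n)) ∪
        ⋃ s : Fin k, {z : B n ⋊[φ n] A n | ∃ a : A n,
          z = (SemidirectProduct.inr a)⁻¹ * (SemidirectProduct.inl (b n s))⁻¹ *
              SemidirectProduct.inr a * SemidirectProduct.inl (b n s)}) = ⊤)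
    (x : Fin m → ∀ n, A n)
    (hX : IsFrame (Subgroup.closure (Set.range x)))
    (ι : (∀ n, A n) →* ∀ n, B n ⋊[φ n] A n)
    (hι : ∀ y n, ι y n = SemidirectProduct.inr (y n))
    (bb : Fin k → ∀ n, B n ⋊[φ n] A n)
    (hbb : ∀ s n, bb s n = SemidirectProduct.inl (b n s)) :
    IsFrame ((Subgroup.closure (Set.range x)).map ι ⊔
      Subgroup.closure {z : ∀ n, B n ⋊[φ n] A n | ∃ (j : Fin m) (s : Fin k),
        z = (ι (x j))⁻¹ * (bb s)⁻¹ * ι (x j) * bb s}) := by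
  classical
  set X : Subgroup (∀ n, A n) := Subgroup.closure (Set.range x) with hXdef
  set C : Set (∀ n, B n ⋊[φ n] A n) := {z : ∀ n, B n ⋊[φ n] A n | ∃ (j : Fin m) (s : Fin k),
        z = (ι (x j))⁻¹ * (bb s)⁻¹ * ι (x j) * bb s} with hCdef
  set Z : Subgroup (∀ n, B n ⋊[φ n] A n) := X.map ι ⊔ Subgroup.closure C with hZdef
  have hιmem : ∀ y, y ∈ X → ι y ∈ Z := fun y hy =>
    (le_sup_left : X.map ι ≤ Z) ⟨y, hy, rfl⟩
  have hCZ : Subgroup.closure C ≤ Z := le_sup_right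
  -- all commutators [ι y, bb s] with y ∈ X lie in Z
  have hcomm : ∀ (s : Fin k) (y : ∀ n, A n), y ∈ X →
      (ι y)⁻¹ * (bb s)⁻¹ * ι y * bb s ∈ Z := by
    intro s y hy
    rw [hXdef] at hy
    refine Subgroup.closure_induction
      (p := fun y _ => (ι y)⁻¹ * (bb s)⁻¹ * ι y * bb s ∈ Z) ?_ ?_ ?_ ?_ hy
    · rintro _ ⟨j, rfl⟩
      exact hCZ (Subgroup.subset_closure ⟨j, s, rfl⟩)
    · have h1 : (ι (1 : ∀ n, A n))⁻¹ * (bb s)⁻¹ * ι 1 * bb s = 1 := by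
        rw [map_one]; group
      rw [h1]; exact one_mem Z
    · intro y z hy' hz' Py Pz
      try simp only [] at Py Pz ⊢
      have key : (ι (y * z))⁻¹ * (bb s)⁻¹ * ι (y * z) * bb s =
          (ι z)⁻¹ * ((ι y)⁻¹ * (bb s)⁻¹ * ι y * bb s) * ι z *
            ((ι z)⁻¹ * (bb s)⁻¹ * ι z * bb s) := by
        rw [map_mul]; group
      rw [key]
      exact mul_mem (mul_mem (mul_mem (inv_mem (hιmem z hz')) Py) (hιmem z hz')) Pz
    · intro y hy' Py
      try simp only [] at Py ⊢
      have key : (ι y⁻¹)⁻¹ * (bb s)⁻¹ * ι y⁻¹ * bb s =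
          ι y * ((ι y)⁻¹ * (bb s)⁻¹ * ι y * bb s)⁻¹ * (ι y)⁻¹ := by
        rw [map_inv]; group
      rw [key]
      exact mul_mem (mul_mem (hιmem y hy') (inv_mem Py)) (inv_mem (hιmem y hy'))
  -- single-coordinate elements of ∏ A lie in X
  have hsingleA : ∀ (n : ℕ) (a : A n), Pi.mulSingle n a ∈ X := by
    intro n a
    apply hX.2.1
    apply Set.Finite.subset (Set.finite_singleton n)
    intro i hi
    simp only [Set.mem_setOf_eq] at hi
    by_contra h
    exact hi (Pi.mulSingle_eq_of_ne (by simpa using h) a)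
  have hιsingle : ∀ (n : ℕ) (a : A n),
      ι (Pi.mulSingle n a) = Pi.mulSingle n (SemidirectProduct.inr a : B n ⋊[φ n] A n) := by
    intro n a
    funext n'
    rw [hι]
    by_cases h : n' = n
    · subst h; rw [Pi.mulSingle_eq_same, Pi.mulSingle_eq_same]
    · rw [Pi.mulSingle_eq_of_ne h, Pi.mulSingle_eq_of_ne h, map_one]
  -- single-coordinate elements of ∏ M lie in Z
  have hsingleM : ∀ (n : ℕ) (g : B n ⋊[φ n] A n), Pi.mulSingle n g ∈ Z := by
    intro n g
    have hg : g ∈ Subgroup.closure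
      ((Set.range ⇑(SemidirectProduct.inr : A n →* B n ⋊[φ n] A n)) ∪
        ⋃ s : Fin k, {z : B n ⋊[φ n] A n | ∃ a : A n,
          z = (SemidirectProduct.inr a)⁻¹ * (SemidirectProduct.inl (b n s))⁻¹ *
              SemidirectProduct.inr a * SemidirectProduct.inl (b n s)}) := by
      rw [hgen n]; exact Subgroup.mem_top g
    refine Subgroup.closure_induction
      (p := fun g _ => Pi.mulSingle n g ∈ Z) ?_ ?_ ?_ ?_ hg
    · rintro z (⟨a, rfl⟩ | hz)
      · try simp only []
        rw [← hιsingle]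
        exact hιmem _ (hsingleA n a)
      · simp only [Set.mem_iUnion, Set.mem_setOf_eq] at hz
        obtain ⟨s, a, rfl⟩ := hz
        have key : Pi.mulSingle n ((SemidirectProduct.inr a)⁻¹ *
              (SemidirectProduct.inl (b n s))⁻¹ * SemidirectProduct.inr a *
              SemidirectProduct.inl (b n s)) =
            (ι (Pi.mulSingle n a))⁻¹ * (bb s)⁻¹ * ι (Pi.mulSingle n a) * bb s := by
          funext n'
          simp only [Pi.mul_apply, Pi.inv_apply]
          rw [hι, hbb]
          by_cases h : n' = n
          · subst h; rw [Pi.mulSingle_eq_same, Pi.mulSingle_eq_same]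
          · rw [Pi.mulSingle_eq_of_ne h, Pi.mulSingle_eq_of_ne h, map_one]
            group
        try simp only []
        rw [key]
        exact hcomm s _ (hsingleA n a)
    · rw [Pi.mulSingle_one]; exact one_mem Z
    · intro g h _ _ Pg Ph
      try simp only [] at Pg Ph ⊢
      rw [Pi.mulSingle_mul]; exact mul_mem Pg Ph
    · intro g _ Pg
      try simp only [] at Pg ⊢
      rw [Pi.mulSingle_inv]; exact inv_mem Pg
  -- finitely supported elements of ∏ M lie in Z
  have hfinsupZ : ∀ g : ∀ n, B n ⋊[φ n] A n, {i | g i ≠ 1}.Finite → g ∈ Z := by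
    intro g hfin
    have key : ∀ (T : Finset ℕ) (g : ∀ n, B n ⋊[φ n] A n),
        (∀ i, i ∉ T → g i = 1) → g ∈ Z := by
      intro T
      induction T using Finset.induction with
      | empty =>
        intro g hg
        have : g = 1 := funext fun i => hg i (by simp)
        rw [this]; exact one_mem Z
      | @insert a T ha ih =>
        intro g hg
        have hdecomp : g = Pi.mulSingle a (g a) * Function.update g a 1 := by
          funext i
          by_cases h : i = a
          · subst h
            rw [Pi.mul_apply, Pi.mulSingle_eq_same, Function.update_self, mul_one]
          · rw [Pi.mul_apply, Pi.mulSingle_eq_of_ne h, Function.update_of_ne h, one_mul]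
        rw [hdecomp]
        refine mul_mem (hsingleM a (g a)) (ih _ ?_)
        intro i hi
        by_cases h : i = a
        · subst h; rw [Function.update_self]
        · rw [Function.update_of_ne h]
          exact hg i (by simp [hi, h])
    exact key hfin.toFinset g fun i hi => by
      by_contra h
      exact hi (hfin.mem_toFinset.mpr h)
  -- Z is the closure of a finite set
  have hZ_closure : Z = Subgroup.closure ((ι '' Set.range x) ∪ C) := by
    rw [Subgroup.closure_union, ← MonoidHom.map_closure, hZdef, hXdef]
  have hCfin : C.Finite := by
    apply Set.Finite.subset (Set.finite_range
      (fun p : Fin m × Fin k => (ι (x p.1))⁻¹ * (bb p.2)⁻¹ * ι (x p.1) * bb p.2))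
    rintro z ⟨j, s, rfl⟩
    exact ⟨(j, s), rfl⟩
  refine ⟨?_, hfinsupZ, ?_⟩
  · rw [Subgroup.fg_iff]
    exact ⟨_, hZ_closure.symm, Set.Finite.union ((Set.finite_range x).image ι) hCfin⟩
  -- the congruence condition
  intro H hH
  haveI : H.FiniteIndex := hH
  set N : Subgroup Z := H.normalCore with hNdef
  haveI hNfi : N.FiniteIndex := Subgroup.finiteIndex_normalCore H
  have hNnormal : N.Normal := Subgroup.normalCore_normal H
  have hNH : N ≤ H := Subgroup.normalCore_le H
  -- the map X → Z induced by ι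
  set f : X →* Z := MonoidHom.codRestrict (ι.comp X.subtype) Z
    (fun y => hιmem _ y.2) with hfdef
  have hfval : ∀ y : X, (f y : ∀ n, B n ⋊[φ n] A n) = ι ↑y := fun y => rfl
  -- the commutator maps X → Z
  set cm : Fin k → X → Z := fun s y =>
    ⟨(ι ↑y)⁻¹ * (bb s)⁻¹ * ι ↑y * bb s, hcomm s ↑y y.2⟩ with hcmdef
  have hc_one : ∀ s : Fin k, cm s 1 = 1 := by
    intro s
    apply Subtype.ext
    show (ι ((1 : X) : ∀ n, A n))⁻¹ * (bb s)⁻¹ * ι ((1 : X) : ∀ n, A n) * bb s = 1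
    rw [Subgroup.coe_one, map_one]; group
  have hc_mul : ∀ (s : Fin k) (y z : X), cm s (y * z) =
      (f z)⁻¹ * cm s y * f z * cm s z := by
    intro s y z
    apply Subtype.ext
    show (ι ((y * z : X) : ∀ n, A n))⁻¹ * (bb s)⁻¹ * ι ((y * z : X) : ∀ n, A n) * bb s =
      (ι ↑z)⁻¹ * ((ι ↑y)⁻¹ * (bb s)⁻¹ * ι ↑y * bb s) * ι ↑z *
        ((ι ↑z)⁻¹ * (bb s)⁻¹ * ι ↑z * bb s)
    rw [Subgroup.coe_mul, map_mul]; group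
  have hc_inv : ∀ (s : Fin k) (y : X), cm s y⁻¹ =
      f y * (cm s y)⁻¹ * (f y)⁻¹ := by
    intro s y
    apply Subtype.ext
    show (ι ((y⁻¹ : X) : ∀ n, A n))⁻¹ * (bb s)⁻¹ * ι ((y⁻¹ : X) : ∀ n, A n) * bb s =
      ι ↑y * ((ι ↑y)⁻¹ * (bb s)⁻¹ * ι ↑y * bb s)⁻¹ * (ι ↑y)⁻¹
    rw [Subgroup.coe_inv, map_inv]; group
  -- the finite-index subgroup K of X
  set K : Subgroup X :=
    { carrier := {y : X | f y ∈ N ∧ ∀ s : Fin k, cm s y ∈ N}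
      one_mem' := by
        refine ⟨by rw [map_one]; exact one_mem N, fun s => ?_⟩
        rw [hc_one]; exact one_mem N
      mul_mem' := by
        rintro y z ⟨hy1, hy2⟩ ⟨hz1, hz2⟩
        refine ⟨by rw [map_mul]; exact mul_mem hy1 hz1, fun s => ?_⟩
        rw [hc_mul]
        have h1 : (f z)⁻¹ * cm s y * f z ∈ N := by
          have := hNnormal.conj_mem _ (hy2 s) (f z)⁻¹
          simpa using this
        exact mul_mem h1 (hz2 s)
      inv_mem' := by
        rintro y ⟨hy1, hy2⟩
        refine ⟨by rw [map_inv]; exact inv_mem hy1, fun s => ?_⟩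
        rw [hc_inv]
        exact hNnormal.conj_mem _ (inv_mem (hy2 s)) (f y) } with hKdef
  have hKmem : ∀ y : X, y ∈ K ↔ (f y ∈ N ∧ ∀ s : Fin k, cm s y ∈ N) := fun y => Iff.rfl
  -- K has finite index via the map into (Z⧸N) × (Fin k → Z⧸N)
  haveI : Finite (Z ⧸ N) := Subgroup.finite_quotient_of_finiteIndex
  set F : X → (Z ⧸ N) × (Fin k → Z ⧸ N) := fun y =>
    (QuotientGroup.mk ((f y)⁻¹), fun s => QuotientGroup.mk ((cm s y)⁻¹)) with hFdef
  have hdescent : ∀ y z : X, y⁻¹ * z ∈ K → F y = F z := by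
    intro y z hu
    set u : X := y⁻¹ * z with hudef
    have hyu : y * u = z := by rw [hudef]; group
    obtain ⟨hu1, hu2⟩ := hu
    have e1 : f y * (f z)⁻¹ ∈ N := by
      have : f y * (f z)⁻¹ = f y * (f u)⁻¹ * (f y)⁻¹ := by
        rw [← hyu, map_mul]; group
      rw [this]
      exact hNnormal.conj_mem _ (inv_mem hu1) (f y)
    have e2 : ∀ s : Fin k, cm s y * (cm s z)⁻¹ ∈ N := by
      intro s
      have : cm s y * (cm s z)⁻¹ =
          (cm s y * (cm s u)⁻¹ * (cm s y)⁻¹) * (cm s y * (f u)⁻¹ * (cm s y)⁻¹) * f u := by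
        rw [← hyu, hc_mul]; group
      rw [this]
      exact mul_mem (mul_mem (hNnormal.conj_mem _ (inv_mem (hu2 s)) (cm s y))
        (hNnormal.conj_mem _ (inv_mem hu1) (cm s y))) hu1
    rw [hFdef]
    refine Prod.ext ?_ (funext fun s => ?_)
    · show (QuotientGroup.mk ((f y)⁻¹) : Z ⧸ N) = QuotientGroup.mk ((f z)⁻¹)
      rw [QuotientGroup.eq, inv_inv]
      exact e1
    · show (QuotientGroup.mk ((cm s y)⁻¹) : Z ⧸ N) = QuotientGroup.mk ((cm s z)⁻¹)
      rw [QuotientGroup.eq, inv_inv]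
      exact e2 s
  have hinj : ∀ y z : X, F y = F z → y⁻¹ * z ∈ K := by
    intro y z hF
    have w1 : f y * (f z)⁻¹ ∈ N := by
      have := congrArg Prod.fst hF
      simp only [hFdef] at this
      rw [QuotientGroup.eq, inv_inv] at this
      exact this
    have w2 : ∀ s : Fin k, cm s y * (cm s z)⁻¹ ∈ N := by
      intro s
      have := congrFun (congrArg Prod.snd hF) s
      simp only [hFdef] at this
      rw [QuotientGroup.eq, inv_inv] at this
      exact this
    set u : X := y⁻¹ * z with hudef
    have hyu : y * u = z := by rw [hudef]; group
    have hu1 : f u ∈ N := by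
      have : f u = (f y)⁻¹ * (f y * (f z)⁻¹)⁻¹ * f y := by
        rw [hudef, map_mul, map_inv]; group
      rw [this]
      simpa using hNnormal.conj_mem _ (inv_mem w1) (f y)⁻¹
    refine ⟨hu1, fun s => ?_⟩
    have hz : cm s z = (f u)⁻¹ * cm s y * f u * cm s u := by rw [← hyu, hc_mul]
    have key : cm s u = ((f u)⁻¹ * ((cm s y)⁻¹ * f u * cm s y)) *
        ((cm s y)⁻¹ * (cm s y * (cm s z)⁻¹)⁻¹ * cm s y) := by
      rw [hz]; group
    rw [key]
    refine mul_mem (mul_mem (inv_mem hu1) ?_) ?_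
    · have := hNnormal.conj_mem _ hu1 (cm s y)⁻¹
      simpa using this
    · have := hNnormal.conj_mem _ (inv_mem (w2 s)) (cm s y)⁻¹
      simpa using this
  haveI hfinq : Finite (X ⧸ K) := by
    have hlift : ∀ (a b : X), (QuotientGroup.leftRel K) a b → F a = F b := by
      intro a b hab
      exact hdescent a b ((QuotientGroup.leftRel_apply).mp hab)
    refine Finite.of_injective (Quotient.lift F hlift) ?_
    intro q1 q2
    induction q1 using Quotient.ind with | _ a =>
    induction q2 using Quotient.ind with | _ c =>
    intro h
    exact Quotient.sound ((QuotientGroup.leftRel_apply).mpr (hinj a c h))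
  haveI hKfi : K.FiniteIndex := Subgroup.finiteIndex_of_finite_quotient
  obtain ⟨V, hV⟩ := hX.2.2 K hKfi
  refine ⟨V, ?_⟩
  intro g hg
  -- truncation homomorphism on ∏ M and truncation on ∏ A
  set θ : (∀ n, B n ⋊[φ n] A n) →* (∀ n, B n ⋊[φ n] A n) :=
    { toFun := fun w n => if n ∈ V then 1 else w n
      map_one' := by funext n; by_cases hn : n ∈ V <;> simp [hn]
      map_mul' := by
        intro w w'
        funext n
        by_cases hn : n ∈ V <;> simp [hn] } with hθdef
  have hθval : ∀ (w : ∀ n, B n ⋊[φ n] A n) (n : ℕ), θ w n = if n ∈ V then 1 else w n :=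
    fun w n => rfl
  set trA : (∀ n, A n) → (∀ n, A n) := fun y n => if n ∈ V then 1 else y n with htrAdef
  have htrAval : ∀ (y : ∀ n, A n) (n : ℕ), trA y n = if n ∈ V then 1 else y n :=
    fun y n => rfl
  have htrX : ∀ j : Fin m, trA (x j) ∈ X := by
    intro j
    have hd : (fun n => if n ∈ V then (x j n)⁻¹ else 1) ∈ X := by
      apply hX.2.1
      apply Set.Finite.subset V.finite_toSet
      intro i hi
      simp only [Set.mem_setOf_eq, ne_eq, ite_ne_right_iff] at hi
      exact hi.1
    have hxj : x j ∈ X := Subgroup.subset_closure (Set.mem_range_self j)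
    have : trA (x j) = x j * fun n => if n ∈ V then (x j n)⁻¹ else 1 := by
      funext n
      rw [htrAval, Pi.mul_apply]
      by_cases hn : n ∈ V
      · rw [if_pos hn, if_pos hn, mul_inv_cancel]
      · rw [if_neg hn, if_neg hn, mul_one]
    rw [this]
    exact mul_mem hxj hd
  have htrK : ∀ j : Fin m, (⟨trA (x j), htrX j⟩ : X) ∈ K := by
    intro j
    apply hV
    intro i hi
    show trA (x j) i = 1
    rw [htrAval, if_pos hi]
  have hθι : ∀ j : Fin m, θ (ι (x j)) = ι (trA (x j)) := by
    intro j
    funext n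
    rw [hθval, hι (x j) n, hι (trA (x j)) n, htrAval]
    by_cases hn : n ∈ V
    · rw [if_pos hn, if_pos hn, map_one]
    · rw [if_neg hn, if_neg hn]
  have hθc : ∀ (j : Fin m) (s : Fin k),
      θ ((ι (x j))⁻¹ * (bb s)⁻¹ * ι (x j) * bb s) =
        (ι (trA (x j)))⁻¹ * (bb s)⁻¹ * ι (trA (x j)) * bb s := by
    intro j s
    funext n
    rw [hθval]
    simp only [Pi.mul_apply, Pi.inv_apply]
    rw [hι (x j) n, hι (trA (x j)) n, hbb, htrAval]
    by_cases hn : n ∈ V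
    · rw [if_pos hn, if_pos hn, map_one]
      group
    · rw [if_neg hn, if_neg hn]
  -- every element of Z is mapped by θ into (the image of) N
  have hmain : ∀ w, w ∈ Z → θ w ∈ N.map Z.subtype := by
    intro w hw
    rw [hZ_closure] at hw
    refine Subgroup.closure_induction
      (p := fun w _ => θ w ∈ N.map Z.subtype) ?_ ?_ ?_ ?_ hw
    · rintro w (⟨y, ⟨j, rfl⟩, rfl⟩ | ⟨j, s, rfl⟩)
      · try simp only []
        rw [hθι j]
        exact ⟨f ⟨trA (x j), htrX j⟩, (htrK j).1, rfl⟩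
      · try simp only []
        rw [hθc j s]
        exact ⟨cm s ⟨trA (x j), htrX j⟩, (htrK j).2 s, rfl⟩
    · rw [map_one]; exact one_mem _
    · intro a c _ _ Pa Pc
      try simp only [] at Pa Pc ⊢
      rw [map_mul]; exact mul_mem Pa Pc
    · intro a _ Pa
      try simp only [] at Pa ⊢
      rw [map_inv]; exact inv_mem Pa
  have hθg : θ ↑g = ↑g := by
    funext n
    rw [hθval]
    by_cases hn : n ∈ V
    · rw [if_pos hn, hg n hn]
    · rw [if_neg hn]
  have hgN : (↑g : ∀ n, B n ⋊[φ n] A n) ∈ N.map Z.subtype := by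
    rw [← hθg]; exact hmain ↑g g.2
  obtain ⟨z', hz'N, hz'⟩ := hgN
  have : z' = g := Subgroup.subtype_injective Z hz'
  rw [← this] at *
  exact hNH hz'N
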